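/- For every k ≥ 0, the k-th Faà di Bruno iterate h^(k) has the form h^(k) = z^k + (terms of order z^{k-2} and lower); precisely: the coefficient of z^k in h^(k) equals 1, the coefficient of z^{k-1} in h^(k) equals 0, and the coefficient of z^m in h^(k) equals 0 for every m > k. -/

import Mathlib

/-
We model the ring `R((z⁻¹))` of formal Laurent series in `z⁻¹` over `R`
(series `Σ_{n ≤ N} a_n zⁿ` with finitely many positive powers of `z`)
as `HahnSeries ℤ R`, with the convention that the index `n : ℤ` records the
coefficient of `z^(-n)`; thus the coefficient of `zᵐ` in `f` is `f.coeff (-m)`,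
and `z` itself is `HahnSeries.single (-1) 1`.
-/

/-- The coefficientwise extension of an additive map `d : R → R` to `R((z⁻¹))`. -/
noncomputable def coeffExt {R : Type*} [CommRing R] (d : R →+ R)
    (f : HahnSeries ℤ R) : HahnSeries ℤ R where
  coeff n := d (f.coeff n)
  isPWO_support' := f.isPWO_support'.mono (fun n hn => by
    simp only [Function.mem_support] at hn ⊢
    exact fun h => hn (by rw [h, map_zero]))

/-- The Faà di Bruno iterates `h^(0) = 1`, `h^(k+1) = d(h^(k)) + h * h^(k)` in `R((z⁻¹))`. -/
noncomputable def fdb {R : Type*} [CommRing R] (d : R →+ R)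
    (h : HahnSeries ℤ R) : ℕ → HahnSeries ℤ R
  | 0 => 1
  | k + 1 => coeffExt d (fdb d h k) + h * fdb d h k

/-- Let `R` be a commutative ring with a derivation `d`, and let
`h = z + Σ_{l ≥ 1} h_l z^(-l)` in `R((z⁻¹))`.  For every `k ≥ 0`, the `k`-th
Faà di Bruno iterate `h^(k)` has the form `h^(k) = z^k + O(z^(k-2))`:
the coefficient of `z^k` equals `1`, the coefficient of `z^(k-1)` equals `0`,
and the coefficient of `z^m` equals `0` for every `m > k`. -/
theorem faa_di_bruno_leading_form
    {R : Type*} [CommRing R] (d : R →+ R)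
    (hd : ∀ a b : R, d (a * b) = a * d b + d a * b)
    (h : HahnSeries ℤ R)
    (hz : h.coeff (-1) = 1)
    (h0 : h.coeff 0 = 0)
    (hpos : ∀ m : ℤ, 2 ≤ m → h.coeff (-m) = 0)
    (k : ℕ) :
    (fdb d h k).coeff (-(k : ℤ)) = 1 ∧
    (fdb d h k).coeff (-((k : ℤ) - 1)) = 0 ∧
    ∀ m : ℤ, (k : ℤ) < m → (fdb d h k).coeff (-m) = 0 := by

  have hd1 : d 1 = 0 := by
    have h2 : d 1 = d 1 + d 1 := by simpa using hd 1 1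
    exact (left_eq_add.mp h2)
  induction k with
  | zero =>
    refine ⟨by simp [fdb], ?_, ?_⟩
    · have : ((1 : HahnSeries ℤ R)).coeff (-((0:ℤ) - 1)) = 0 := by
        rw [HahnSeries.coeff_one]
        norm_num
      simpa [fdb] using this
    · intro m hm
      have : ((1 : HahnSeries ℤ R)).coeff (-m) = 0 := by
        rw [HahnSeries.coeff_one]
        have : ¬ (-m = 0) := by omega
        simp [this]
      simpa [fdb] using this
  | succ k ih =>
    obtain ⟨ih1, ih2, ih3⟩ := ih
    set f := fdb d h k with hf
    have hfb : ∀ b : ℤ, b < -(k:ℤ) → f.coeff b = 0 := by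
      intro b hb
      have := ih3 (-b) (by omega)
      simpa using this
    set h' := h - HahnSeries.single (-1) (1:R) with hh'
    have hh'c : ∀ j : ℤ, j < 1 → h'.coeff j = 0 := by
      intro j hj
      rw [hh', HahnSeries.coeff_sub]
      rcases eq_or_ne j (-1) with rfl | hne
      · simp [hz]
      · rw [HahnSeries.coeff_single_of_ne hne]
        rcases eq_or_ne j 0 with rfl | h0'
        · simp [h0]
        · have hj2 : h.coeff (-(-j)) = 0 := hpos (-j) (by omega)
          simp only [neg_neg] at hj2
          simp [hj2]
    have hmul : ∀ n : ℤ, n < 1 - (k:ℤ) → (h' * f).coeff n = 0 := by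
      intro n hn
      by_contra hc
      have hmem : n ∈ (h' * f).support := hc
      obtain ⟨a, ha, b, hb, hab⟩ := HahnSeries.support_mul_subset hmem
      have ha1 : 1 ≤ a := by
        by_contra hx
        exact ha (hh'c a (by omega))
      have hb1 : -(k:ℤ) ≤ b := by
        by_contra hx
        exact hb (hfb b (by omega))
      replace hab : a + b = n := hab
      omega
    have hexp : ∀ n : ℤ, (fdb d h (k+1)).coeff n
        = d (f.coeff n) + (f.coeff (n+1) + (h' * f).coeff n) := by
      intro n
      have hsplit : h = HahnSeries.single (-1) (1:R) + h' := by rw [hh']; ring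
      have hs : ((HahnSeries.single (-1) (1:R)) * f).coeff n = f.coeff (n+1) := by
        have := HahnSeries.coeff_single_mul_add (r := (1:R)) (x := f) (a := n+1) (b := (-1:ℤ))
        simpa using this
      have h1 : (fdb d h (k+1)).coeff n = d (f.coeff n) + (h * f).coeff n := by
        show (coeffExt d f + h * f).coeff n = _
        rw [HahnSeries.coeff_add]; rfl
      rw [h1, hsplit, add_mul, HahnSeries.coeff_add, hs]
    refine ⟨?_, ?_, ?_⟩
    · have e1 : f.coeff (-((k:ℤ)+1)) = 0 := by
        have := ih3 ((k:ℤ)+1) (by omega)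
        simpa using this
      have e2 : (-((k:ℤ)+1)) + 1 = -(k:ℤ) := by ring
      rw [show (-(((k:ℕ)+1 : ℕ) : ℤ)) = (-((k:ℤ)+1)) by push_cast; ring,
        hexp, e1, e2, ih1, hmul _ (by omega), map_zero]
      ring
    · have e2 : (-(k:ℤ)) + 1 = -((k:ℤ)-1) := by ring
      rw [show (-((((k:ℕ)+1 : ℕ) : ℤ) - 1)) = (-(k:ℤ)) by push_cast; ring,
        hexp, e2, ih1, ih2, hmul _ (by omega), hd1]
      ring
    · intro m hm
      have e1 : f.coeff (-m) = 0 := ih3 m (by omega)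
      have e2 : f.coeff (-m + 1) = 0 := by
        have := ih3 (m-1) (by push_cast at hm; omega)
        simpa [show -(m-1) = -m+1 by ring] using this
      rw [hexp, e1, e2, hmul _ (by push_cast at hm; omega), map_zero]
      ring
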